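/- With the recursively defined polynomials $P^{[i]}$ as in the block Clenshaw recurrence for a block upper Hessenberg matrix $H$ with invertible subdiagonal blocks ($P^{[0]} = I_s$, $P^{[1]}(\lambda) = \lambda I - \Phi_1$, $P^{[i]}(\lambda) = P^{[i-1]}(\lambda)(\lambda\Gamma_i^{-1} - \Gamma_i^{-1}\Phi_i) - \sum_{h=1}^{i-1}P^{[h-1]}(\lambda)\Gamma_h^{-1}\Xi_{h,i}$, with $\Gamma_1 = I_s$), one has for all $1 \le i \le j$: $(P^{[i-1]}(H) \circ E_1)\,\Gamma_i^{-1} = E_i$, where $E_i = e_i \otimes I_s$. -/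

import Mathlib

open Matrix Polynomial

abbrev Mat (s : ℕ) := Matrix (Fin s) (Fin s) ℂ

/-- The `(p,q)` block (of size `s × s`) of a `js × js` block matrix. -/
def blk {j s : ℕ} (H : Matrix (Fin j × Fin s) (Fin j × Fin s) ℂ) (p q : Fin j) :
    Mat s := Matrix.of fun a b => H (p, a) (q, b)

/-- The `i`-th block canonical vector `E_i = e_i ⊗ I_s`. -/
def blkE {j s : ℕ} (i : Fin j) : Matrix (Fin j × Fin s) (Fin s) ℂ :=
  Matrix.of fun pa b => if pa.1 = i ∧ pa.2 = b then 1 else 0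

/-- Block upper Hessenberg: all blocks strictly below the first subdiagonal vanish. -/
def BUH {j s : ℕ} (H : Matrix (Fin j × Fin s) (Fin j × Fin s) ℂ) : Prop :=
  ∀ p q : Fin j, (q : ℕ) + 1 < (p : ℕ) → blk H p q = 0

/-- The action `P(N) ∘ W := ∑ᵢ Nⁱ W Pᵢ` of a matrix polynomial on a block vector. -/
noncomputable def act {n : Type*} [Fintype n] [DecidableEq n] {s : ℕ}
    (P : Polynomial (Mat s)) (N : Matrix n n ℂ) (W : Matrix n (Fin s) ℂ) :
    Matrix n (Fin s) ℂ :=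
  ∑ i ∈ Finset.range (P.natDegree + 1), (N ^ i) * W * P.coeff i

/-- Evaluation of a matrix polynomial at a scalar: `P(z) = ∑ᵢ zⁱ Pᵢ`. -/
noncomputable def evalS {s : ℕ} (P : Polynomial (Mat s)) (z : ℂ) : Mat s :=
  ∑ i ∈ Finset.range (P.natDegree + 1), z ^ i • P.coeff i

/-- The subdiagonal block `Γ_i = H_{(i-1)(i-2)}` (paper indexing, `2 ≤ i ≤ j`),
with the convention `Γ_i = I` out of range (in particular `Γ₁ = I`). -/
noncomputable def Gam {j s : ℕ} (H : Matrix (Fin j × Fin s) (Fin j × Fin s) ℂ)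
    (i : ℕ) : Mat s :=
  if h : 2 ≤ i ∧ i ≤ j then blk H ⟨i - 1, by omega⟩ ⟨i - 2, by omega⟩ else 1

/-- Diagonal block `Φ_i = H_{(i-1)(i-1)}` (paper indexing, `1 ≤ i ≤ j`). -/
noncomputable def PhiD {j s : ℕ} (H : Matrix (Fin j × Fin s) (Fin j × Fin s) ℂ)
    (i : ℕ) : Mat s :=
  if h : 1 ≤ i ∧ i ≤ j then blk H ⟨i - 1, by omega⟩ ⟨i - 1, by omega⟩ else 0

/-- Block `Ξ_{p,q} = H_{(p-1)(q-1)}` (paper indexing). -/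
noncomputable def XiD {j s : ℕ} (H : Matrix (Fin j × Fin s) (Fin j × Fin s) ℂ)
    (p q : ℕ) : Mat s :=
  if h : 1 ≤ p ∧ p ≤ j ∧ 1 ≤ q ∧ q ≤ j then
    blk H ⟨p - 1, by omega⟩ ⟨q - 1, by omega⟩ else 0

/-- The block Clenshaw recurrence:
`P⁰ = I`, `P¹(λ) = λI − Φ₁`,
`Pⁱ(λ) = Pⁱ⁻¹(λ)(λΓᵢ⁻¹ − Γᵢ⁻¹Φᵢ) − ∑_{h=1}^{i-1} Pʰ⁻¹(λ) Γₕ⁻¹ Ξ_{h,i}`  (with `Γ₁ = I`). -/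
def ClenshawRec {j s : ℕ} (H : Matrix (Fin j × Fin s) (Fin j × Fin s) ℂ)
    (P : ℕ → Polynomial (Mat s)) : Prop :=
  P 0 = 1 ∧
  P 1 = Polynomial.X - Polynomial.C (PhiD H 1) ∧
  ∀ i : ℕ, 2 ≤ i → i ≤ j →
    P i = P (i - 1) * (Polynomial.X * Polynomial.C (Gam H i)⁻¹ -
            Polynomial.C ((Gam H i)⁻¹ * PhiD H i)) -
          ∑ h ∈ Finset.Icc 1 (i - 1),
            P (h - 1) * Polynomial.C ((Gam H h)⁻¹ * XiD H h i)



section Helpers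

variable {s : ℕ} {n : Type*} [Fintype n] [DecidableEq n]

lemma act_ext (P : Polynomial (Mat s)) (N : ℕ) (hN : P.natDegree < N)
    (H : Matrix n n ℂ) (W : Matrix n (Fin s) ℂ) :
    act P H W = ∑ k ∈ Finset.range N, (H ^ k) * W * P.coeff k := by
  refine Finset.sum_subset (Finset.range_subset_range.2 hN) ?_
  intro k _ hk
  simp only [Finset.mem_range, not_lt] at hk
  rw [Polynomial.coeff_eq_zero_of_natDegree_lt (by omega), Matrix.mul_zero]

lemma act_zero (H : Matrix n n ℂ) (W : Matrix n (Fin s) ℂ) : act 0 H W = 0 := by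
  simp [act]

lemma act_add (P Q : Polynomial (Mat s)) (H : Matrix n n ℂ) (W : Matrix n (Fin s) ℂ) :
    act (P + Q) H W = act P H W + act Q H W := by
  set N := max P.natDegree Q.natDegree + 1 with hN
  rw [act_ext (P + Q) N (lt_of_le_of_lt (Polynomial.natDegree_add_le P Q) (by omega)),
    act_ext P N (by omega), act_ext Q N (by omega), ← Finset.sum_add_distrib]
  simp [Polynomial.coeff_add, Matrix.mul_add]

lemma act_neg (P : Polynomial (Mat s)) (H : Matrix n n ℂ) (W : Matrix n (Fin s) ℂ) :
    act (-P) H W = - act P H W := by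
  unfold act
  rw [Polynomial.natDegree_neg, ← Finset.sum_neg_distrib]
  simp

lemma act_sub (P Q : Polynomial (Mat s)) (H : Matrix n n ℂ) (W : Matrix n (Fin s) ℂ) :
    act (P - Q) H W = act P H W - act Q H W := by
  rw [sub_eq_add_neg, act_add, act_neg, sub_eq_add_neg]

lemma act_sum {ι : Type*} (t : Finset ι) (f : ι → Polynomial (Mat s))
    (H : Matrix n n ℂ) (W : Matrix n (Fin s) ℂ) :
    act (∑ h ∈ t, f h) H W = ∑ h ∈ t, act (f h) H W := by
  induction t using Finset.cons_induction with
  | empty => simp [act_zero]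
  | cons a t ha ih => rw [Finset.sum_cons, Finset.sum_cons, act_add, ih]

lemma act_one (H : Matrix n n ℂ) (W : Matrix n (Fin s) ℂ) : act 1 H W = W := by
  simp [act]

lemma act_X (H : Matrix n n ℂ) (W : Matrix n (Fin s) ℂ) : act Polynomial.X H W = H * W := by
  rw [act_ext Polynomial.X 2 (lt_of_le_of_lt Polynomial.natDegree_X_le one_lt_two)]
  simp [Finset.sum_range_succ]

lemma act_C (A : Mat s) (H : Matrix n n ℂ) (W : Matrix n (Fin s) ℂ) :
    act (Polynomial.C A) H W = W * A := by
  rw [act_ext (Polynomial.C A) 1 (by simp)]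
  simp

lemma act_mul_C (P : Polynomial (Mat s)) (A : Mat s) (H : Matrix n n ℂ)
    (W : Matrix n (Fin s) ℂ) :
    act (P * Polynomial.C A) H W = act P H W * A := by
  rw [act_ext (P * Polynomial.C A) (P.natDegree + 1)
    (lt_of_le_of_lt Polynomial.natDegree_mul_le (by simp)), act, Matrix.sum_mul]
  simp [Polynomial.coeff_mul_C, Matrix.mul_assoc]

lemma act_mul_X (P : Polynomial (Mat s)) (H : Matrix n n ℂ) (W : Matrix n (Fin s) ℂ) :
    act (P * Polynomial.X) H W = H * act P H W := by
  have hd : (P * Polynomial.X).natDegree < P.natDegree + 1 + 1 := by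
    have h1 : (P * Polynomial.X).natDegree ≤ P.natDegree + Polynomial.X.natDegree :=
      Polynomial.natDegree_mul_le
    have h2 : (Polynomial.X : Polynomial (Mat s)).natDegree ≤ 1 := Polynomial.natDegree_X_le
    omega
  rw [act_ext _ _ hd, Finset.sum_range_succ', act, Matrix.mul_sum]
  simp only [Polynomial.coeff_mul_X, Polynomial.mul_coeff_zero, Polynomial.coeff_X_zero,
    Matrix.mul_zero, add_zero, pow_succ']
  exact Finset.sum_congr rfl fun k _ => by simp only [Matrix.mul_assoc]

end Helpers

section Blocks

variable {j s : ℕ}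

/-- Total version of the block canonical vectors. -/
noncomputable def E' (j s : ℕ) (t : ℕ) : Matrix (Fin j × Fin s) (Fin s) ℂ :=
  if ht : t < j then blkE ⟨t, ht⟩ else 0

lemma E'_eq (t : ℕ) (ht : t < j) : E' j s t = blkE (⟨t, ht⟩ : Fin j) := dif_pos ht

lemma mul_blkE (H : Matrix (Fin j × Fin s) (Fin j × Fin s) ℂ) (p : Fin j) :
    H * blkE (s := s) p = ∑ q : Fin j, blkE (s := s) q * blk H q p := by
  ext ⟨r, a⟩ b
  simp only [Matrix.mul_apply, blkE, blk, Matrix.sum_apply, Matrix.of_apply,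
    Fintype.sum_prod_type, mul_ite, mul_one, mul_zero, ite_mul, one_mul, zero_mul]
  rw [Finset.sum_comm]
  simp [ite_and, Finset.sum_ite_eq, Finset.sum_ite_eq']

lemma XiD_eq (H : Matrix (Fin j × Fin s) (Fin j × Fin s) ℂ) (p q : ℕ)
    (hp : p < j) (hq : q < j) : XiD H (p + 1) (q + 1) = blk H ⟨p, hp⟩ ⟨q, hq⟩ := by
  rw [XiD, dif_pos ⟨by omega, by omega, by omega, by omega⟩]
  rfl

lemma Gam_eq (H : Matrix (Fin j × Fin s) (Fin j × Fin s) ℂ) (k : ℕ)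
    (h1 : k + 1 < j) (h0 : k < j) : Gam H (k + 2) = blk H ⟨k + 1, h1⟩ ⟨k, h0⟩ := by
  rw [Gam, dif_pos ⟨by omega, by omega⟩]
  rfl

lemma hess_expand (H : Matrix (Fin j × Fin s) (Fin j × Fin s) ℂ) (hH : BUH H)
    (k : ℕ) (hij : k + 2 ≤ j) :
    H * E' j s k =
      (∑ h ∈ Finset.Icc 1 (k + 1), E' j s (h - 1) * XiD H h (k + 1)) +
        E' j s (k + 1) * Gam H (k + 2) := by
  have hk : k < j := by omega
  rw [E'_eq k hk, mul_blkE]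
  have key : ∀ q : Fin j, blkE (s := s) q * blk H q ⟨k, hk⟩ =
      (fun t : ℕ => E' j s t * (if ht : t < j then blk H ⟨t, ht⟩ ⟨k, hk⟩ else 0)) q := by
    intro q
    simp only [q.isLt, dif_pos, E'_eq q.val q.isLt, Fin.eta]
  rw [Finset.sum_congr rfl fun q _ => key q,
    Fin.sum_univ_eq_sum_range
      (fun t => E' j s t * (if ht : t < j then blk H ⟨t, ht⟩ ⟨k, hk⟩ else 0)) j]
  rw [← Finset.sum_subset (Finset.range_subset_range.2 hij) ?zero]
  case zero =>
    intro t ht hti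
    simp only [Finset.mem_range, not_lt] at ht hti
    rw [dif_pos ht, hH ⟨t, ht⟩ ⟨k, hk⟩ (by simp; omega), Matrix.mul_zero]
  rw [show k + 2 = (k + 1) + 1 from rfl, Finset.sum_range_succ,
    show (k + 1) + 1 = k + 2 from rfl]
  congr 1
  · rw [← Finset.Ico_add_one_right_eq_Icc, Finset.sum_Ico_eq_sum_range]
    have he : k + 1 + 1 - 1 = k + 1 := by omega
    rw [he]
    refine Finset.sum_congr rfl fun t ht => ?_
    simp only [Finset.mem_range] at ht
    have ha : 1 + t - 1 = t := by omega
    have hb : t < j := by omega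
    rw [ha, dif_pos hb, Nat.add_comm 1 t, XiD_eq H t k hb hk]
  · have h1 : k + 1 < j := by omega
    rw [dif_pos h1, Gam_eq H k h1 hk]

lemma XiD_self (H : Matrix (Fin j × Fin s) (Fin j × Fin s) ℂ) (k : ℕ)
    (h1 : 1 ≤ k) (h2 : k ≤ j) : XiD H k k = PhiD H k := by
  rw [XiD, PhiD, dif_pos ⟨h1, h2, h1, h2⟩, dif_pos ⟨h1, h2⟩]

lemma GamGamInv (H : Matrix (Fin j × Fin s) (Fin j × Fin s) ℂ)
    (hinv : ∀ i : ℕ, 2 ≤ i → i ≤ j → IsUnit (Gam H i)) (k : ℕ) (hk : k ≤ j) :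
    Gam H k * (Gam H k)⁻¹ = 1 := by
  rcases lt_or_ge k 2 with h | h
  · have hg : Gam H k = 1 := dif_neg (by omega)
    rw [hg]
    exact Matrix.mul_nonsing_inv _ (by simp)
  · exact Matrix.mul_nonsing_inv _ ((Matrix.isUnit_iff_isUnit_det _).mp (hinv k h hk))

end Blocks

/-- for the block Clenshaw polynomials, `(P^{[i-1]}(H) ∘ E₁) Γᵢ⁻¹ = Eᵢ`
for all `1 ≤ i ≤ j`. -/
theorem clenshaw_intermediate {j s : ℕ} (hj : 0 < j)
    (H : Matrix (Fin j × Fin s) (Fin j × Fin s) ℂ) (hH : BUH H)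
    (hinv : ∀ i : ℕ, 2 ≤ i → i ≤ j → IsUnit (Gam H i))
    (P : ℕ → Polynomial (Mat s)) (hP : ClenshawRec (j := j) H P) :
    ∀ (i : ℕ) (h1 : 1 ≤ i) (h2 : i ≤ j),
      act (P (i - 1)) H (blkE (⟨0, hj⟩ : Fin j)) * (Gam H i)⁻¹ =
        blkE (⟨i - 1, by omega⟩ : Fin j) := by
  obtain ⟨hP0, hP1, hPrec⟩ := hP
  have claim : ∀ i : ℕ, 1 ≤ i → i ≤ j →
      act (P (i - 1)) H (E' j s 0) = E' j s (i - 1) * Gam H i := by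
    intro i
    induction i using Nat.strong_induction_on with
    | _ i IH =>
      match i with
      | 0 => intro h1 _; omega
      | 1 =>
        intro _ h2
        have hg : Gam H 1 = (1 : Mat s) := dif_neg (by omega)
        simp [hP0, act_one, hg]
      | 2 =>
        intro _ h2
        have hx := hess_expand H hH 0 h2
        simp only [show (0:ℕ) + 1 = 1 from rfl, show (0:ℕ) + 2 = 2 from rfl,
          show (1:ℕ) - 1 = 0 from rfl, Finset.Icc_self, Finset.sum_singleton] at hx
        rw [show (2:ℕ) - 1 = 1 from rfl, hP1, act_sub, act_X, act_C, hx,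
          XiD_self H 1 le_rfl (by omega)]
        abel
      | (m + 3) =>
        intro _ h2
        have hrec := hPrec (m + 2) (by omega) (by omega)
        rw [show m + 2 - 1 = m + 1 from rfl] at hrec
        rw [show m + 3 - 1 = m + 2 from rfl, hrec]
        have hsplit : P (m + 1) * (Polynomial.X * Polynomial.C (Gam H (m+2))⁻¹ -
            Polynomial.C ((Gam H (m+2))⁻¹ * PhiD H (m+2))) =
            (P (m + 1) * Polynomial.X) * Polynomial.C (Gam H (m+2))⁻¹ -
            P (m + 1) * Polynomial.C ((Gam H (m+2))⁻¹ * PhiD H (m+2)) := by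
          rw [mul_sub, ← mul_assoc]
        rw [act_sub, hsplit, act_sub, act_mul_C, act_mul_X, act_mul_C, act_sum]
        have ih1 : act (P (m + 1)) H (E' j s 0) = E' j s (m + 1) * Gam H (m + 2) := by
          have := IH (m + 2) (by omega) (by omega) (by omega)
          simpa using this
        rw [ih1]
        have hsum : ∑ h ∈ Finset.Icc 1 (m + 1),
            act (P (h - 1) * Polynomial.C ((Gam H h)⁻¹ * XiD H h (m + 2))) H (E' j s 0) =
            ∑ h ∈ Finset.Icc 1 (m + 1), E' j s (h - 1) * XiD H h (m + 2) := by
          refine Finset.sum_congr rfl fun h hh => ?_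
          simp only [Finset.mem_Icc] at hh
          rw [act_mul_C]
          have ihh : act (P (h - 1)) H (E' j s 0) = E' j s (h - 1) * Gam H h :=
            IH h (by omega) hh.1 (by omega)
          rw [ihh, Matrix.mul_assoc, ← Matrix.mul_assoc (Gam H h),
            GamGamInv H hinv h (by omega), Matrix.one_mul]
        rw [hsum]
        have hG : Gam H (m + 2) * (Gam H (m + 2))⁻¹ = 1 :=
          GamGamInv H hinv (m + 2) (by omega)
        rw [← Matrix.mul_assoc H (E' j s (m + 1)) (Gam H (m + 2)),
          Matrix.mul_assoc (H * E' j s (m + 1)) (Gam H (m + 2)) (Gam H (m + 2))⁻¹, hG,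
          Matrix.mul_one,
          Matrix.mul_assoc (E' j s (m + 1)) (Gam H (m + 2)) ((Gam H (m + 2))⁻¹ * PhiD H (m + 2)),
          ← Matrix.mul_assoc (Gam H (m + 2)) (Gam H (m + 2))⁻¹ (PhiD H (m + 2)), hG,
          Matrix.one_mul]
        have hx := hess_expand H hH (m + 1) (by omega)
        rw [show m + 1 + 1 = m + 2 from rfl, show m + 1 + 2 = m + 3 from rfl] at hx
        have hsplit2 : ∑ h ∈ Finset.Icc 1 (m + 2), E' j s (h - 1) * XiD H h (m + 2) =
            (∑ h ∈ Finset.Icc 1 (m + 1), E' j s (h - 1) * XiD H h (m + 2)) +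
              E' j s (m + 2 - 1) * XiD H (m + 2) (m + 2) :=
          Finset.sum_Icc_succ_top (a := 1) (b := m + 1) (by omega) _
        rw [hx, hsplit2, XiD_self H (m + 2) (by omega) (by omega),
          show m + 2 - 1 = m + 1 from rfl]
        abel
  intro i h1 h2
  have hE0 : blkE (⟨0, hj⟩ : Fin j) = E' j s 0 := (E'_eq 0 hj).symm
  have hEi : blkE (⟨i - 1, by omega⟩ : Fin j) = E' j s (i - 1) :=
    (E'_eq (i - 1) (by omega)).symm
  rw [hE0, claim i h1 h2, hEi, Matrix.mul_assoc, GamGamInv H hinv i h2, Matrix.mul_one]
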